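/- The lowering operator identity holds for A₁-type Macdonald polynomials: (x/(x² − 1))·(M_m(qx; q, t) − M_m(q⁻¹x; q, t)) = (q^m − q^{−m})·M_{m−1}(x; q, q·t) for all m ≥ 1. -/

import Mathlib

set_option maxHeartbeats 1600000


/-- The finite q-Pochhammer symbol `(a;q)_n = ∏_{j=0}^{n-1} (1 − a q^j)`. -/
noncomputable def qPoch (a q : ℂ) (n : ℕ) : ℂ := ∏ j ∈ Finset.range n, (1 - a * q ^ j)

/-- The `A₁`-type Macdonald polynomial. -/
noncomputable def macdonaldA1 (n : ℕ) (x q t : ℂ) : ℂ :=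
  qPoch (q ^ 2) (q ^ 2) n / qPoch (t ^ 2) (q ^ 2) n *
    ∑ j ∈ Finset.range (n + 1),
      qPoch (t ^ 2) (q ^ 2) j * qPoch (t ^ 2) (q ^ 2) (n - j) /
          (qPoch (q ^ 2) (q ^ 2) j * qPoch (q ^ 2) (q ^ 2) (n - j)) *
        x ^ ((j : ℤ) - ((n : ℤ) - (j : ℤ)))

lemma qPoch_zero (a q : ℂ) : qPoch a q 0 = 1 := by simp [qPoch]

lemma qPoch_succ (a q : ℂ) (n : ℕ) : qPoch a q (n+1) = qPoch a q n * (1 - a * q ^ n) :=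
  Finset.prod_range_succ _ n

lemma qPoch_shift (a q : ℂ) (n : ℕ) : qPoch a q (n+1) = (1 - a) * qPoch (q * a) q n := by
  unfold qPoch
  rw [Finset.prod_range_succ']
  simp only [pow_zero, mul_one]
  rw [mul_comm]
  congr 1
  exact Finset.prod_congr rfl fun i _ => by ring

lemma key_term (q t : ℂ) (hq0 : q ≠ 0) (ht0 : t ≠ 0)
    (hqp : ∀ k : ℕ, qPoch (q ^ 2) (q ^ 2) k ≠ 0)
    (htp : ∀ k : ℕ, qPoch (t ^ 2) (q ^ 2) k ≠ 0)
    (htp' : ∀ k : ℕ, qPoch ((q * t) ^ 2) (q ^ 2) k ≠ 0)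
    (r j : ℕ) (hj : j ≤ r + 1) :
    qPoch (q^2) (q^2) (r+1) / qPoch (t^2) (q^2) (r+1) *
      (qPoch (t^2) (q^2) j * qPoch (t^2) (q^2) (r+1-j) /
        (qPoch (q^2) (q^2) j * qPoch (q^2) (q^2) (r+1-j))) *
      ((q^2)^j - (q^2)^(r+1-j))
    = ((q^2)^(r+1) - 1) * (qPoch (q^2) (q^2) r / qPoch ((q*t)^2) (q^2) r) *
      ((if j = 0 then 0 else qPoch ((q*t)^2) (q^2) (j-1) * qPoch ((q*t)^2) (q^2) (r-(j-1)) /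
          (qPoch (q^2) (q^2) (j-1) * qPoch (q^2) (q^2) (r-(j-1))))
       - (if j = r+1 then 0 else qPoch ((q*t)^2) (q^2) j * qPoch ((q*t)^2) (q^2) (r-j) /
          (qPoch (q^2) (q^2) j * qPoch (q^2) (q^2) (r-j)))) := by
  have h1T : (1:ℂ) - t^2 ≠ 0 := by
    have := htp 1
    simpa [qPoch] using this
  simp only [mul_pow] at htp' ⊢
  rcases Nat.eq_zero_or_pos j with hj0 | hjpos
  · subst hj0
    rw [if_pos rfl, if_neg (by omega : ¬ (0 = r+1))]
    simp only [Nat.sub_zero, qPoch_zero, one_mul, mul_one]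
    have n1 := hqp (r+1); have n2 := htp (r+1); have n3 := hqp r; have n4 := htp' r
    field_simp
    ring
  rcases eq_or_lt_of_le hj with hjm | hjlt
  · subst hjm
    rw [if_neg (by omega : ¬ r+1 = 0), if_pos rfl]
    simp only [Nat.add_sub_cancel, Nat.sub_self, qPoch_zero, one_mul, mul_one]
    have n1 := hqp (r+1); have n2 := htp (r+1); have n3 := hqp r; have n4 := htp' r
    field_simp
    ring
  · -- middle case: 1 ≤ j ≤ r
    obtain ⟨i, rfl⟩ : ∃ i, j = i + 1 := ⟨j - 1, by omega⟩
    obtain ⟨s, rfl⟩ : ∃ s, r = i + s + 1 := ⟨r - i - 1, by omega⟩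
    rw [if_neg (by omega : ¬ i+1 = 0), if_neg (by omega : ¬ i+1 = i+s+1+1)]
    rw [show i+s+1+1-(i+1) = s+1 from by omega, show i+1-1 = i from by omega,
      show i+s+1-i = s+1 from by omega, show i+s+1-(i+1) = s from by omega]
    have hQs : ∀ k : ℕ, (1:ℂ) - q^2 * (q^2)^k ≠ 0 := fun k =>
      right_ne_zero_of_mul (by rw [← qPoch_succ]; exact hqp (k+1))
    have hQTs : ∀ k : ℕ, (1:ℂ) - q^2 * t^2 * (q^2)^k ≠ 0 := fun k =>
      right_ne_zero_of_mul (by rw [← qPoch_succ]; exact htp' (k+1))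
    have n1 := hqp i; have n2 := hqp s; have n3 := hqp (i+s+1)
    have n1' := hqp (i+1); have n2' := hqp (s+1); have n3' := hqp (i+s+1+1)
    have n4 := htp' i; have n5 := htp' s; have n6 := htp' (i+s+1)
    have n4' := htp' (i+1); have n5' := htp' (s+1)
    have m1 := htp (i+1); have m2 := htp (s+1); have m3 := htp (i+s+1+1)
    field_simp
    rw [show i+s+1+1 = (i+s+1)+1 from rfl]
    rw [qPoch_succ (q^2) (q^2) (i+s+1), qPoch_shift (t^2) (q^2) (i+s+1),
      qPoch_shift (t^2) (q^2) i, qPoch_shift (t^2) (q^2) s,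
      qPoch_succ (q^2) (q^2) i, qPoch_succ (q^2) (q^2) s,
      qPoch_succ (q^2 * t^2) (q^2) i, qPoch_succ (q^2 * t^2) (q^2) s]
    ring
lemma term_L (q x p c : ℂ) (hq0 : q ≠ 0) (hx0 : x ≠ 0) (r j : ℕ) (hj : j ≤ r + 1) :
    q ^ (r+1) * (x * (p * (c * (q * x) ^ ((j:ℤ) - ((((r:ℕ)+1:ℕ):ℤ) - (j:ℤ))) -
        c * (q⁻¹ * x) ^ ((j:ℤ) - ((((r:ℕ)+1:ℕ):ℤ) - (j:ℤ)))))) =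
      p * c * ((q^2)^j - (q^2)^(r+1-j)) * x ^ (2*(j:ℤ) - (r:ℤ)) := by
  set e : ℤ := (j:ℤ) - ((((r:ℕ)+1:ℕ):ℤ) - (j:ℤ)) with he
  rw [mul_zpow, mul_zpow, inv_zpow, ← zpow_neg]
  have h1 : q ^ (r+1) * q ^ e = (q^2)^j := by
    rw [← zpow_natCast q (r+1), ← zpow_add₀ hq0]
    rw [show (((r+1:ℕ)):ℤ) + e = ((2*j : ℕ) : ℤ) by rw [he]; omega]
    rw [zpow_natCast, pow_mul]
  have h2 : q ^ (r+1) * q ^ (-e) = (q^2)^(r+1-j) := by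
    rw [← zpow_natCast q (r+1), ← zpow_add₀ hq0]
    rw [show (((r+1:ℕ)):ℤ) + (-e) = ((2*(r+1-j) : ℕ) : ℤ) by rw [he]; omega]
    rw [zpow_natCast, pow_mul]
  have h3 : x * x ^ e = x ^ (2*(j:ℤ) - (r:ℤ)) := by
    calc x * x ^ e = x ^ (1:ℤ) * x ^ e := by rw [zpow_one]
    _ = x ^ (1 + e) := (zpow_add₀ hx0 1 e).symm
    _ = x ^ (2*(j:ℤ) - (r:ℤ)) := by rw [he]; congr 1; omega
  calc q ^ (r+1) * (x * (p * (c * (q ^ e * x ^ e) - c * (q ^ (-e) * x ^ e))))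
      = p * c * ((q ^ (r+1) * q ^ e) - (q ^ (r+1) * q ^ (-e))) * (x * x ^ e) := by ring
  _ = p * c * ((q^2)^j - (q^2)^(r+1-j)) * x ^ (2*(j:ℤ) - (r:ℤ)) := by rw [h1, h2, h3]

lemma term_R (q x p c : ℂ) (hq0 : q ≠ 0) (hx0 : x ≠ 0) (r k : ℕ) :
    ((q^2)^(r+1) - 1) * p * c * x ^ (2*((k:ℤ)+1) - (r:ℤ))
      - ((q^2)^(r+1) - 1) * p * c * x ^ (2*(k:ℤ) - (r:ℤ))
    = q ^ (r+1) * ((q^(r+1) - (q^(r+1))⁻¹) * (p * (c * x ^ ((k:ℤ) - ((r:ℤ) - (k:ℤ))))) * (x^2 - 1)) := by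
  have hqq : q^(r+1) * (q^(r+1) - (q^(r+1))⁻¹) = (q^2)^(r+1) - 1 := by
    rw [mul_sub, mul_inv_cancel₀ (pow_ne_zero _ hq0), ← pow_add,
      show (r+1)+(r+1) = 2*(r+1) from by ring, pow_mul]
  have h2 : x ^ (2*((k:ℤ)+1) - (r:ℤ)) = x ^ ((k:ℤ) - ((r:ℤ) - k)) * x ^ 2 := by
    rw [show (2*((k:ℤ)+1) - (r:ℤ)) = ((k:ℤ) - ((r:ℤ)-k)) + 2 from by ring, zpow_add₀ hx0]
    rw [show ((2:ℤ)) = ((2:ℕ):ℤ) from by norm_num, zpow_natCast]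
  have h3 : x ^ (2*(k:ℤ) - (r:ℤ)) = x ^ ((k:ℤ) - ((r:ℤ) - k)) := by congr 1; ring
  rw [h2, h3]
  linear_combination (-(p * c * x ^ ((k:ℤ) - ((r:ℤ) - k)) * (x^2 - 1))) * hqq


/-- Lowering operator identity with parameter shift for `A₁`-type Macdonald polynomials:
`(x/(x² − 1))·(M_m(qx;q,t) − M_m(q⁻¹x;q,t)) = (q^m − q^{−m})·M_{m−1}(x;q,qt)` for `m ≥ 1`. -/
theorem macdonaldA1_lowering (m : ℕ) (hm : 1 ≤ m) (x q t : ℂ)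
    (hx0 : x ≠ 0) (hx1 : x ≠ 1) (hx2 : x ≠ -1) (hq0 : q ≠ 0) (ht0 : t ≠ 0)
    (hqp : ∀ k : ℕ, qPoch (q ^ 2) (q ^ 2) k ≠ 0)
    (htp : ∀ k : ℕ, qPoch (t ^ 2) (q ^ 2) k ≠ 0)
    (htp' : ∀ k : ℕ, qPoch ((q * t) ^ 2) (q ^ 2) k ≠ 0) :
    x / (x ^ 2 - 1) * (macdonaldA1 m (q * x) q t - macdonaldA1 m (q⁻¹ * x) q t) =
      (q ^ m - (q ^ m)⁻¹) * macdonaldA1 (m - 1) x q (q * t) := by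
  obtain ⟨r, rfl⟩ : ∃ r, m = r + 1 := ⟨m - 1, (Nat.sub_add_cancel hm).symm⟩
  have hx21 : x ^ 2 - 1 ≠ 0 := by
    intro h
    have h2 : (x - 1) * (x + 1) = 0 := by linear_combination h
    rcases mul_eq_zero.mp h2 with h3 | h3
    · exact hx1 (by linear_combination h3)
    · exact hx2 (by linear_combination h3)
  simp only [macdonaldA1, Nat.add_sub_cancel]
  rw [div_mul_eq_mul_div, div_eq_iff hx21]
  apply mul_left_cancel₀ (pow_ne_zero (r+1) hq0)
  trans (∑ j ∈ Finset.range (r+1+1),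
      (((q^2)^(r+1) - 1) * (qPoch (q^2) (q^2) r / qPoch ((q*t)^2) (q^2) r) *
        ((if j = 0 then 0 else qPoch ((q*t)^2) (q^2) (j-1) * qPoch ((q*t)^2) (q^2) (r-(j-1)) /
            (qPoch (q^2) (q^2) (j-1) * qPoch (q^2) (q^2) (r-(j-1))))
         - (if j = r+1 then 0 else qPoch ((q*t)^2) (q^2) j * qPoch ((q*t)^2) (q^2) (r-j) /
            (qPoch (q^2) (q^2) j * qPoch (q^2) (q^2) (r-j))))) * x ^ (2*(j:ℤ) - (r:ℤ)))
  · -- left side equals middle sum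
    conv_lhs => rw [← mul_sub, ← Finset.sum_sub_distrib, Finset.mul_sum, Finset.mul_sum,
      Finset.mul_sum]
    refine Finset.sum_congr rfl fun j hj => ?_
    have hj' : j ≤ r + 1 := by
      have := Finset.mem_range.mp hj; omega
    rw [term_L q x _ _ hq0 hx0 r j hj']
    rw [key_term q t hq0 ht0 hqp htp htp' r j hj']
  · -- middle sum equals right side
    conv_rhs => rw [Finset.mul_sum, Finset.mul_sum, Finset.sum_mul, Finset.mul_sum]
    have step1 : ∀ j ∈ Finset.range (r+1+1),
        (((q^2)^(r+1) - 1) * (qPoch (q^2) (q^2) r / qPoch ((q*t)^2) (q^2) r) *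
          ((if j = 0 then 0 else qPoch ((q*t)^2) (q^2) (j-1) * qPoch ((q*t)^2) (q^2) (r-(j-1)) /
              (qPoch (q^2) (q^2) (j-1) * qPoch (q^2) (q^2) (r-(j-1))))
           - (if j = r+1 then 0 else qPoch ((q*t)^2) (q^2) j * qPoch ((q*t)^2) (q^2) (r-j) /
              (qPoch (q^2) (q^2) j * qPoch (q^2) (q^2) (r-j))))) * x ^ (2*(j:ℤ) - (r:ℤ))
        = (if j = 0 then 0 else ((q^2)^(r+1) - 1) * (qPoch (q^2) (q^2) r / qPoch ((q*t)^2) (q^2) r) *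
              (qPoch ((q*t)^2) (q^2) (j-1) * qPoch ((q*t)^2) (q^2) (r-(j-1)) /
              (qPoch (q^2) (q^2) (j-1) * qPoch (q^2) (q^2) (r-(j-1)))) * x ^ (2*(j:ℤ) - (r:ℤ)))
          - (if j = r+1 then 0 else ((q^2)^(r+1) - 1) * (qPoch (q^2) (q^2) r / qPoch ((q*t)^2) (q^2) r) *
              (qPoch ((q*t)^2) (q^2) j * qPoch ((q*t)^2) (q^2) (r-j) /
              (qPoch (q^2) (q^2) j * qPoch (q^2) (q^2) (r-j))) * x ^ (2*(j:ℤ) - (r:ℤ))) := by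
      intro j _
      split_ifs <;> ring
    rw [Finset.sum_congr rfl step1, Finset.sum_sub_distrib]
    rw [Finset.sum_range_succ']
    rw [Finset.sum_range_succ (fun j => if j = r+1 then 0 else ((q^2)^(r+1) - 1) *
        (qPoch (q^2) (q^2) r / qPoch ((q*t)^2) (q^2) r) *
        (qPoch ((q*t)^2) (q^2) j * qPoch ((q*t)^2) (q^2) (r-j) /
        (qPoch (q^2) (q^2) j * qPoch (q^2) (q^2) (r-j))) * x ^ (2*(j:ℤ) - (r:ℤ))) (r+1)]
    simp only [if_pos rfl, ite_true, Nat.add_sub_cancel, Nat.succ_ne_zero, if_neg, ite_false,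
      add_zero, sub_zero]
    rw [Finset.sum_congr rfl (fun k hk => if_neg (by have := Finset.mem_range.mp hk; omega :
      ¬ k = r+1))]
    rw [← Finset.sum_sub_distrib]
    refine Finset.sum_congr rfl fun k hk => ?_
    rw [show ((k+1:ℕ):ℤ) = (k:ℤ)+1 from by push_cast; ring]
    exact term_R q x _ _ hq0 hx0 r k
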